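/- In a prelinked Grassmannian $\mathrm{LG}(r, E_\bullet)$ over a scheme $S$, the simple points form an open subset. Concretely: if a point $(F_v)_v$ over a field-valued point of $S$ is simple with witnessing data $(v_i, s_i)_{i=1}^r$, then for any family $(\mathcal{F}_v)_v$ over a local ring specializing to $(F_v)_v$, any lifts $\tilde{s}_i \in \mathcal{F}_{v_i}$ of the $s_i$ again have the property that for every vertex $v$, the images $f_{P^{v_i}}(\tilde{s}_i)$ form a basis of $\mathcal{F}_v$. -/

import Mathlib

/-- `IsPathTo src tgt u v l`: the list of edges `l` forms a directed path from
`u` to `v` in the directed graph with edge set `Edg`, sources `src`, targets `tgt`. -/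
def IsPathTo {Vtx Edg : Type*} (src tgt : Edg → Vtx) : Vtx → Vtx → List Edg → Prop
  | u, v, [] => u = v
  | u, v, e :: l => src e = u ∧ IsPathTo src tgt (tgt e) v l

/-- The composite `f_P = f_{e_n} ∘ ⋯ ∘ f_{e_1}` of the matrices along a path. -/
def pathProd {Edg : Type*} {A : Type*} [CommRing A] {d : ℕ}
    (f : Edg → Matrix (Fin d) (Fin d) A) (l : List Edg) : Matrix (Fin d) (Fin d) A :=
  l.foldl (fun acc e => f e * acc) 1

/-- The prelinked Grassmannian compatibility condition: for any two paths `P, P'`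
with the same tail and head there are scalars `s, s'` with `s • f_P = s' • f_{P'}`,
invertible when the corresponding other path is minimal. -/
def Prelinked {Vtx Edg : Type*} (src tgt : Edg → Vtx) {A : Type*} [CommRing A]
    {d : ℕ} (f : Edg → Matrix (Fin d) (Fin d) A) : Prop :=
  ∀ (u v : Vtx) (l l' : List Edg), IsPathTo src tgt u v l → IsPathTo src tgt u v l' →
    ∃ s s' : A, s • pathProd f l = s' • pathProd f l' ∧
      ((∀ l'' : List Edg, IsPathTo src tgt u v l'' → l.length ≤ l''.length) → IsUnit s') ∧
      ((∀ l'' : List Edg, IsPathTo src tgt u v l'' → l'.length ≤ l''.length) → IsUnit s)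

/-- Reduction of a submodule of `R^d` along a ring map `g : R →+* S`: the
`S`-span of the image. -/
def redSub {R S : Type*} [CommRing R] [CommRing S] (g : R →+* S) {d : ℕ}
    (N : Submodule R (Fin d → R)) : Submodule S (Fin d → S) :=
  Submodule.span S ((fun x i => g (x i)) '' (N : Set (Fin d → R)))

lemma foldl_eq {Edg A : Type*} [CommRing A] {d : ℕ}
    (f : Edg → Matrix (Fin d) (Fin d) A) (l : List Edg) (M : Matrix (Fin d) (Fin d) A) :
    l.foldl (fun acc e => f e * acc) M = pathProd f l * M := by
  induction l generalizing M with
  | nil => simp only [List.foldl_nil, pathProd, one_mul]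
  | cons e l ih =>
    rw [List.foldl_cons, ih, show pathProd f (e :: l) = pathProd f l * (f e * 1) from ih _,
      mul_one, mul_assoc]

lemma pathProd_cons {Edg A : Type*} [CommRing A] {d : ℕ}
    (f : Edg → Matrix (Fin d) (Fin d) A) (e : Edg) (l : List Edg) :
    pathProd f (e :: l) = pathProd f l * f e := by
  show (e :: l).foldl (fun acc e => f e * acc) 1 = _
  rw [List.foldl_cons, foldl_eq, mul_one]

lemma pathProd_map {Edg K A : Type*} [CommRing K] [CommRing A] {d : ℕ}
    (g : K →+* A) (f : Edg → Matrix (Fin d) (Fin d) K) (l : List Edg) :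
    pathProd (fun e => (f e).map g) l = (pathProd f l).map g := by
  induction l with
  | nil => show (1 : Matrix _ _ A) = _ ; simp [pathProd, Matrix.map_one g g.map_zero g.map_one]
  | cons e l ih => rw [pathProd_cons, pathProd_cons, ih, Matrix.map_mul]

lemma pathProd_mem {Vtx Edg A : Type*} [CommRing A] {d : ℕ}
    (src tgt : Edg → Vtx) (f' : Edg → Matrix (Fin d) (Fin d) A)
    (𝓕 : Vtx → Submodule A (Fin d → A))
    (hlink : ∀ e : Edg, Submodule.map (f' e).mulVecLin (𝓕 (src e)) ≤ 𝓕 (tgt e))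
    {a b : Vtx} {l : List Edg} (hl : IsPathTo src tgt a b l)
    {x : Fin d → A} (hx : x ∈ 𝓕 a) : (pathProd f' l).mulVec x ∈ 𝓕 b := by
  induction l generalizing a x with
  | nil =>
    obtain rfl : a = b := hl
    simpa [pathProd, Matrix.one_mulVec] using hx
  | cons e l ih =>
    obtain ⟨hsrc, hrest⟩ := hl
    rw [pathProd_cons, ← Matrix.mulVec_mulVec]
    exact ih hrest (hlink e ⟨x, hsrc ▸ hx, rfl⟩)

lemma red_mulVec {K A : Type*} [CommRing K] [CommRing A] [Algebra K A] {d r : ℕ}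
    (ρ : A →+* K) (hρ : ∀ x : K, ρ (algebraMap K A x) = x)
    (M : Matrix (Fin r) (Fin d) K) (x : Fin d → A) (j : Fin r) :
    ρ (((M.map (algebraMap K A)).mulVec x) j) = (M.mulVec fun k => ρ (x k)) j := by
  simp only [Matrix.mulVec, dotProduct, map_sum, map_mul, Matrix.map_apply, hρ]

/-- Proposition `simple-open`: simple points of a prelinked
Grassmannian form an open subset.  Concretely: if a point `(F_v)` over a field
`K` is simple, witnessed by vertices `vsel i`, vectors `ssel i ∈ F (vsel i)` and
paths `P v i` whose images form bases of each `F v`, then for any linked family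
`(𝓕_v)` of rank-`r` direct summands over a local ring `A` specializing to
`(F_v)` (along a retraction `ρ : A → K` onto the residue field), any lifts
`t i ∈ 𝓕 (vsel i)` of the `ssel i` again have the property that for every
vertex `v` the path-images of the `t i` generate `𝓕 v` and are linearly
independent, i.e. form a basis of `𝓕 v`. -/
theorem stmt_14 (K : Type*) [Field K] (Vtx Edg : Type*) [Fintype Vtx] [Fintype Edg]
    (src tgt : Edg → Vtx) (d r : ℕ)
    (f : Edg → Matrix (Fin d) (Fin d) K)
    (hconn : ∀ u v : Vtx, ∃ l : List Edg, IsPathTo src tgt u v l)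
    (hpre : Prelinked src tgt f)
    -- the simple `K`-point `(F_v)`:
    (F : Vtx → Submodule K (Fin d → K))
    (hFrank : ∀ v, Module.finrank K (F v) = r)
    (hFlink : ∀ e : Edg, Submodule.map (f e).mulVecLin (F (src e)) ≤ F (tgt e))
    (vsel : Fin r → Vtx) (ssel : Fin r → (Fin d → K))
    (hssel : ∀ i, ssel i ∈ F (vsel i))
    (P : Vtx → Fin r → List Edg)
    (hP : ∀ v i, IsPathTo src tgt (vsel i) v (P v i))
    (hsimple : ∀ v : Vtx,
      LinearIndependent K (fun i => (pathProd f (P v i)).mulVec (ssel i)) ∧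
      Submodule.span K (Set.range fun i => (pathProd f (P v i)).mulVec (ssel i)) = F v)
    -- a family over a local ring `A` specializing to `(F_v)`:
    (A : Type*) [CommRing A] [IsLocalRing A] [Algebra K A]
    (ρ : A →+* K) (hρ : ∀ x : K, ρ (algebraMap K A x) = x)
    (hρker : RingHom.ker ρ = IsLocalRing.maximalIdeal A)
    (𝓕 : Vtx → Submodule A (Fin d → A))
    (h𝓕sum : ∀ v, ∃ c, IsCompl (𝓕 v) c)
    (h𝓕link : ∀ e : Edg,
      Submodule.map ((f e).map (algebraMap K A)).mulVecLin (𝓕 (src e)) ≤ 𝓕 (tgt e))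
    (h𝓕red : ∀ v, redSub ρ (𝓕 v) = F v)
    -- lifts of the `ssel i`:
    (t : Fin r → (Fin d → A))
    (htmem : ∀ i, t i ∈ 𝓕 (vsel i))
    (htlift : ∀ i, (fun j => ρ (t i j)) = ssel i) :
    ∀ v : Vtx,
      LinearIndependent A
        (fun i => (pathProd (fun e => (f e).map (algebraMap K A)) (P v i)).mulVec (t i)) ∧
      Submodule.span A
        (Set.range fun i =>
          (pathProd (fun e => (f e).map (algebraMap K A)) (P v i)).mulVec (t i)) = 𝓕 v := by
  intro v
  classical
  set alg := algebraMap K A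
  set f' : Edg → Matrix (Fin d) (Fin d) A := fun e => (f e).map alg with hf'
  set u : Fin r → (Fin d → A) := fun i => (pathProd f' (P v i)).mulVec (t i) with hu
  set F' : Fin r → (Fin d → K) := fun i => (pathProd f (P v i)).mulVec (ssel i) with hF'
  -- reduction of the lifts
  have hred_u : ∀ i, (fun j => ρ (u i j)) = F' i := by
    intro i
    funext j
    rw [hu, hF']
    simp only [hf', pathProd_map alg f]
    rw [red_mulVec ρ hρ, htlift]
  -- membership
  have hu_mem : ∀ i, u i ∈ 𝓕 v := fun i =>
    pathProd_mem src tgt f' 𝓕 h𝓕link (hP v i) (htmem i)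
  -- units from nonzero reduction
  have hunit : ∀ a : A, ρ a ≠ 0 → IsUnit a := by
    intro a ha
    by_contra h
    exact ha (by rwa [← RingHom.mem_ker, hρker, IsLocalRing.mem_maximalIdeal])
  -- a left inverse matrix over K
  have hli := (hsimple v).1
  obtain ⟨B, hB⟩ : ∃ B : Matrix (Fin r) (Fin d) K, ∀ i, B.mulVec (F' i) = Pi.single i 1 := by
    have hli' : LinearIndependent K F' := hli
    set W := Submodule.span K (Set.range F') with hW
    let b : Module.Basis (Fin r) K W := Module.Basis.span hli'
    obtain ⟨q, hq⟩ := Submodule.exists_isCompl W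
    let π := W.linearProjOfIsCompl q hq
    let φ : (Fin d → K) →ₗ[K] (Fin r → K) :=
      (Finsupp.linearEquivFunOnFinite K K (Fin r)).toLinearMap ∘ₗ
        (b.repr : W ≃ₗ[K] (Fin r →₀ K)).toLinearMap ∘ₗ π
    refine ⟨LinearMap.toMatrix' φ, fun i => ?_⟩
    have h1 : π (F' i) = b i := by
      have h2 : F' i = ((b i : W) : Fin d → K) := by
        rw [Module.Basis.span_apply]
      rw [h2]
      exact Submodule.linearProjOfIsCompl_apply_left hq (b i)
    have h3 : φ (F' i) = Pi.single i 1 := by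
      show (Finsupp.linearEquivFunOnFinite K K (Fin r)) (b.repr (π (F' i))) = _
      rw [h1, Module.Basis.repr_self, Finsupp.linearEquivFunOnFinite_single]
    calc (LinearMap.toMatrix' φ).mulVec (F' i)
        = Matrix.toLin' (LinearMap.toMatrix' φ) (F' i) := (Matrix.toLin'_apply _ _).symm
      _ = φ (F' i) := by rw [Matrix.toLin'_toMatrix']
      _ = Pi.single i 1 := h3
  set C : Matrix (Fin r) (Fin r) A :=
    Matrix.of (fun i' i => ((B.map alg).mulVec (u i)) i') with hC
  have hCred : ∀ i' i, ρ (C i' i) = (1 : Matrix (Fin r) (Fin r) K) i' i := by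
    intro i' i
    rw [hC, Matrix.of_apply, red_mulVec ρ hρ, hred_u, hB, Matrix.one_apply]
    simp [Pi.single_apply, eq_comm]
  have hCdet : IsUnit C.det := by
    apply hunit
    rw [RingHom.map_det]
    have : C.map ρ = 1 := by
      ext i' i
      exact hCred i' i
    rw [RingHom.mapMatrix_apply, this, Matrix.det_one]
    exact one_ne_zero
  -- independence
  have hind : LinearIndependent A u := by
    rw [Fintype.linearIndependent_iff]
    intro c hc
    have hsum : ∀ i', ∑ i, c i • ((B.map alg).mulVec (u i)) i' = 0 := by
      intro i'
      have h0 : ((B.map alg).mulVecLin (∑ i, c i • u i)) = 0 := by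
        rw [hc]; exact map_zero _
      rw [map_sum] at h0
      simp only [map_smul] at h0
      have := congrFun h0 i'
      simpa [Matrix.mulVecLin_apply, Finset.sum_apply] using this
    have hCc : C.mulVec c = 0 := by
      funext i'
      rw [Matrix.mulVec, dotProduct]
      rw [show (0 : Fin r → A) i' = 0 from rfl]
      rw [← hsum i']
      exact Finset.sum_congr rfl fun i _ => by
        rw [hC, Matrix.of_apply, smul_eq_mul, mul_comm]
    intro i
    have : c = 0 := by
      have h1 : C⁻¹ * C = 1 := Matrix.nonsing_inv_mul C hCdet
      calc c = (1 : Matrix (Fin r) (Fin r) A).mulVec c := by rw [Matrix.one_mulVec]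
        _ = C⁻¹.mulVec (C.mulVec c) := by rw [Matrix.mulVec_mulVec, h1]
        _ = 0 := by rw [hCc, Matrix.mulVec_zero]
    exact congrFun this i
  -- spanning
  have hspan : Submodule.span A (Set.range u) = 𝓕 v := by
    apply le_antisymm
    · rw [Submodule.span_le]
      rintro _ ⟨i, rfl⟩
      exact hu_mem i
    · obtain ⟨cpl, hcpl⟩ := h𝓕sum v
      set pr : (Fin d → A) →ₗ[A] (Fin d → A) :=
        (𝓕 v).subtype ∘ₗ (𝓕 v).linearProjOfIsCompl cpl hcpl with hpr
      have hprmem : ∀ z, pr z ∈ 𝓕 v := fun z => SetLike.coe_mem _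
      have hFG : (𝓕 v).FG := by
        have : 𝓕 v = Submodule.map pr ⊤ := by
          apply le_antisymm
          · intro x hx
            refine ⟨x, trivial, ?_⟩
            rw [hpr]
            exact congrArg Subtype.val (Submodule.projectionOnto_apply_left hcpl ⟨x, hx⟩)
          · rintro _ ⟨z, -, rfl⟩
            exact hprmem z
        rw [this]
        exact Submodule.FG.map _ (Module.Finite.fg_top (R := A) (M := Fin d → A))
      apply Submodule.le_of_le_smul_of_le_jacobson_bot hFG
        ((IsLocalRing.jacobson_eq_maximalIdeal ⊥ bot_ne_top).ge)
      intro x hx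
      -- reduce x
      have hxred : (fun j => ρ (x j)) ∈ F v := by
        rw [← h𝓕red v]
        exact Submodule.subset_span ⟨x, hx, rfl⟩
      rw [← (hsimple v).2] at hxred
      obtain ⟨a, ha⟩ := (Submodule.mem_span_range_iff_exists_fun K).mp hxred
      set s : Fin d → A := ∑ i, alg (a i) • u i with hs
      have hsmem : s ∈ Submodule.span A (Set.range u) :=
        Submodule.sum_mem _ fun i _ => Submodule.smul_mem _ _
          (Submodule.subset_span (Set.mem_range_self i))
      have hy𝓕 : x - s ∈ 𝓕 v := Submodule.sub_mem _ hx
        (Submodule.sum_mem _ fun i _ => Submodule.smul_mem _ _ (hu_mem i))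
      have hyρ : ∀ j, ρ ((x - s) j) = 0 := by
        intro j
        have hsj : ρ (s j) = ρ (x j) := by
          rw [hs]
          simp only [Finset.sum_apply, Pi.smul_apply, smul_eq_mul, map_sum, map_mul, hρ]
          have : ∀ i, ρ (u i j) = F' i j := fun i => congrFun (hred_u i) j
          rw [Finset.sum_congr rfl fun i _ => by rw [this i]]
          have := congrFun ha j
          simpa [Finset.sum_apply] using this
        simp [hsj]
      have hytop : x - s ∈ (IsLocalRing.maximalIdeal A) • (⊤ : Submodule A (Fin d → A)) := by
        have : (x - s) = ∑ j, (x - s) j • (Pi.single j (1 : A) : Fin d → A) := by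
          funext j'
          simp [Pi.single_apply, Finset.sum_apply]
        rw [this]
        refine Submodule.sum_mem _ fun j _ => Submodule.smul_mem_smul ?_ trivial
        rw [← hρker, RingHom.mem_ker]
        exact hyρ j
      have hym : x - s ∈ (IsLocalRing.maximalIdeal A) • 𝓕 v := by
        have h1 : pr (x - s) = x - s := by
          rw [hpr]
          exact congrArg Subtype.val (Submodule.projectionOnto_apply_left hcpl ⟨x - s, hy𝓕⟩)
        have h2 : x - s ∈ Submodule.map pr ((IsLocalRing.maximalIdeal A) • ⊤) :=
          ⟨x - s, hytop, h1⟩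
        rw [Submodule.map_smul''] at h2
        refine Submodule.smul_mono le_rfl ?_ h2
        rintro _ ⟨z, -, rfl⟩
        exact hprmem z
      have : x = s + (x - s) := by ring
      rw [this]
      exact Submodule.add_mem_sup hsmem hym
  exact ⟨hind, hspan⟩
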